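/- Let Γ = ⟨s⟩ be cyclic of order 2 or 3 acting by isometries on a symplectic space V over 𝔽_p with p ≠ 2,3. Then kernel of the restriction of the symplectic form to V^Γ equals (ker of the form)^Γ; in particular if the form on V is nondegenerate, its restriction to V^Γ is nondegenerate. -/

import Mathlib

/-- for `Γ = ⟨s⟩` of order 2 or 3 acting by isometries on a symplectic
(alternating) space `V` over `𝔽_p`, `p ≠ 2, 3`, the kernel of the restriction of the
form to `V^Γ` equals `(ker of the form)^Γ`; in particular if the form is nondegenerate,
so is its restriction to `V^Γ`. -/
theorem stmt9 (p : ℕ) [Fact p.Prime] (hp2 : p ≠ 2) (hp3 : p ≠ 3)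
    (V : Type*) [AddCommGroup V] [Module (ZMod p) V] [FiniteDimensional (ZMod p) V]
    (B : LinearMap.BilinForm (ZMod p) V)
    (halt : ∀ x : V, B x x = 0)
    (s : V ≃ₗ[ZMod p] V)
    (horder : s ^ 2 = 1 ∨ s ^ 3 = 1)
    (hinv : ∀ x y : V, B (s x) (s y) = B x y) :
    ({v : V | s v = v ∧ ∀ y : V, s y = y → B v y = 0}
        = {v : V | s v = v ∧ ∀ y : V, B v y = 0}) ∧
    (B.Nondegenerate →
      ∀ v : V, s v = v → (∀ y : V, s y = y → B v y = 0) → v = 0) := by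
  have htwo : (2 : ZMod p) ≠ 0 := by
    intro h
    have : ((2 : ℕ) : ZMod p) = 0 := by exact_mod_cast h
    have hd := (ZMod.natCast_eq_zero_iff 2 p).mp this
    have hp := (Fact.out : p.Prime)
    rcases (Nat.prime_dvd_prime_iff_eq hp Nat.prime_two).mp hd with rfl
    exact hp2 rfl
  have hthree : (3 : ZMod p) ≠ 0 := by
    intro h
    have : ((3 : ℕ) : ZMod p) = 0 := by exact_mod_cast h
    have hd := (ZMod.natCast_eq_zero_iff 3 p).mp this
    have hp := (Fact.out : p.Prime)
    rcases (Nat.prime_dvd_prime_iff_eq hp Nat.prime_three).mp hd with rfl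
    exact hp3 rfl
  have key : ∀ v : V, s v = v → (∀ y : V, s y = y → B v y = 0) → ∀ y : V, B v y = 0 := by
    intro v hv hker y
    have hvsy : B v (s y) = B v y := by
      conv_lhs => rw [← hv]
      exact hinv v y
    rcases horder with h2 | h3
    · have hsq : s (s y) = y := by
        have := congrArg (fun f : V ≃ₗ[ZMod p] V => f y) h2
        simpa [pow_succ, pow_one] using this
      have hfix : s (y + s y) = y + s y := by
        rw [map_add, hsq, add_comm]
      have h0 := hker _ hfix
      rw [map_add, hvsy] at h0
      have : (2 : ZMod p) * B v y = 0 := by ring_nf; linear_combination h0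
      exact (mul_eq_zero.mp this).resolve_left htwo
    · have hcube : s (s (s y)) = y := by
        have := congrArg (fun f : V ≃ₗ[ZMod p] V => f y) h3
        simpa [pow_succ, pow_one] using this
      have hfix : s (y + s y + s (s y)) = y + s y + s (s y) := by
        rw [map_add, map_add, hcube]
        abel
      have hvssy : B v (s (s y)) = B v y := by
        conv_lhs => rw [← hv]
        rw [hinv v (s y), hvsy]
      have h0 := hker _ hfix
      rw [map_add, map_add, hvsy, hvssy] at h0
      have : (3 : ZMod p) * B v y = 0 := by ring_nf; linear_combination h0
      exact (mul_eq_zero.mp this).resolve_left hthree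
  constructor
  · ext v
    simp only [Set.mem_setOf_eq]
    constructor
    · rintro ⟨hv, hk⟩
      exact ⟨hv, key v hv hk⟩
    · rintro ⟨hv, hk⟩
      exact ⟨hv, fun y _ => hk y⟩
  · intro hnd v hv hk
    exact hnd.1 v (key v hv hk)
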